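/- Let T be a tree (a connected graph with n − 1 edges) on n ≥ 1 vertices indexed by {0,1,…,n−1}, given as a directed graph with incidence matrix A and positive edge weights w_e > 0 collected in the diagonal matrix Z = diag(w_e). Let L = Aᵀ Z⁻¹ A and let X be the unique symmetric matrix with X L = I − 𝟙 e₀ᵀ and X e₀ = 0. Then for any two vertices h and k, (e_h − e_k)ᵀ X (e_h − e_k) equals the sum of the weights w_e over the edges e on the unique path in T joining h and k. -/

import Mathlib

open Matrix

lemma incidence_aux {n E : ℕ} (hn : 1 ≤ n) (hE : E = n - 1)
    (A : Matrix (Fin E) (Fin n) ℝ)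
    (hker : ∀ x : Fin n → ℝ, A *ᵥ x = 0 → ∀ v, x v = x ⟨0, hn⟩) :
    (∀ c : Fin E → ℝ, Aᵀ *ᵥ c = 0 → c = 0) ∧ A *ᵥ (fun _ => (1:ℝ)) = 0 := by
  have hone : (fun _ => (1:ℝ)) ≠ (0 : Fin n → ℝ) := by
    intro hc
    have := congrFun hc ⟨0, hn⟩
    norm_num at this
  have hkerle : LinearMap.ker A.mulVecLin ≤ Submodule.span ℝ {(fun _ => (1:ℝ))} := by
    intro x hx
    rw [LinearMap.mem_ker, Matrix.mulVecLin_apply] at hx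
    have hx' : x = x ⟨0, hn⟩ • (fun _ => (1:ℝ)) := by
      funext v; simp [hker x hx v]
    rw [hx']
    exact Submodule.smul_mem _ _ (Submodule.mem_span_singleton_self _)
  have hkerdim : Module.finrank ℝ (LinearMap.ker A.mulVecLin) ≤ 1 := by
    calc Module.finrank ℝ (LinearMap.ker A.mulVecLin)
        ≤ Module.finrank ℝ (Submodule.span ℝ {(fun _ => (1:ℝ))}) :=
          Submodule.finrank_mono hkerle
      _ = 1 := finrank_span_singleton hone
  have hrn : A.rank + Module.finrank ℝ (LinearMap.ker A.mulVecLin) = n := by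
    have := LinearMap.finrank_range_add_finrank_ker A.mulVecLin
    simpa [Matrix.rank] using this
  have hrle : A.rank ≤ E := by simpa using A.rank_le_card_height
  constructor
  · -- injectivity of Aᵀ
    have hrank : Aᵀ.rank = E := by
      have h1 : A.rank = E := by omega
      rw [Matrix.rank_transpose, h1]
    have hrn' : Aᵀ.rank + Module.finrank ℝ (LinearMap.ker Aᵀ.mulVecLin) = E := by
      have := LinearMap.finrank_range_add_finrank_ker Aᵀ.mulVecLin
      simpa [Matrix.rank] using this
    have hker0 : Module.finrank ℝ (LinearMap.ker Aᵀ.mulVecLin) = 0 := by omega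
    have hbot : LinearMap.ker Aᵀ.mulVecLin = ⊥ := Submodule.finrank_eq_zero.mp hker0
    intro c hc
    have : c ∈ LinearMap.ker Aᵀ.mulVecLin := by
      rw [LinearMap.mem_ker, Matrix.mulVecLin_apply, hc]
    rw [hbot] at this
    simpa using this
  · -- A *ᵥ 𝟙 = 0
    have hpos : 1 ≤ Module.finrank ℝ (LinearMap.ker A.mulVecLin) := by omega
    have hne : LinearMap.ker A.mulVecLin ≠ ⊥ := by
      intro hb
      rw [hb] at hpos
      simp at hpos
    obtain ⟨x, hxmem, hx0⟩ := Submodule.exists_mem_ne_zero_of_ne_bot hne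
    rw [LinearMap.mem_ker, Matrix.mulVecLin_apply] at hxmem
    have hxc : x = x ⟨0, hn⟩ • (fun _ => (1:ℝ)) := by
      funext v; simp [hker x hxmem v]
    have hc0 : x ⟨0, hn⟩ ≠ 0 := by
      intro hc
      rw [hc, zero_smul] at hxc
      exact hx0 hxc
    have : (fun _ => (1:ℝ)) = (x ⟨0, hn⟩)⁻¹ • x := by
      rw [hxc]
      funext v
      simp [hc0]
    rw [this, Matrix.mulVec_smul, hxmem, smul_zero]

/-- For a tree (connected graph with `n - 1` edges) with weighted
Laplacian `L = Aᵀ Z⁻¹ A` and Green matrix `X` (the unique symmetric matrix with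
`X L = I - 𝟙 e₀ᵀ` and `X e₀ = 0`), for any two vertices `h, k`, the quadratic form
`(e_h - e_k)ᵀ X (e_h - e_k)` equals the sum of the weights of the edges on the
(unique) path joining `h` and `k`. A path from `h` to `k` is given by an injective
sequence of vertices `vs : Fin (ℓ+1) → Fin n` starting at `h`, ending at `k`, with
consecutive vertices joined (in either direction) by the edges `es : Fin ℓ → Fin E`. -/
theorem green_matrix_effective_resistance (n E : ℕ) (hn : 1 ≤ n)
    (src tgt : Fin E → Fin n)
    (hconn : ∀ v w : Fin n, Relation.ReflTransGen
      (fun a b => ∃ e : Fin E, (src e = a ∧ tgt e = b) ∨ (src e = b ∧ tgt e = a)) v w)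
    (htree : E = n - 1)
    (A : Matrix (Fin E) (Fin n) ℝ)
    (hA : ∀ e v, A e v = if v = tgt e then 1 else if v = src e then -1 else 0)
    (w : Fin E → ℝ) (hw : ∀ e, 0 < w e)
    (L : Matrix (Fin n) (Fin n) ℝ)
    (hL : L = Aᵀ * (Matrix.diagonal w)⁻¹ * A)
    (X : Matrix (Fin n) (Fin n) ℝ)
    (hXsymm : X.IsSymm)
    (hXL : X * L = 1 - Matrix.vecMulVec (fun _ => 1) (Pi.single (⟨0, hn⟩ : Fin n) 1))
    (hX0 : X *ᵥ Pi.single (⟨0, hn⟩ : Fin n) 1 = 0)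
    (h k : Fin n)
    (ℓ : ℕ) (vs : Fin (ℓ + 1) → Fin n) (es : Fin ℓ → Fin E)
    (hinj : Function.Injective vs)
    (hfirst : vs 0 = h) (hlast : vs (Fin.last ℓ) = k)
    (hpath : ∀ i : Fin ℓ,
      (src (es i) = vs i.castSucc ∧ tgt (es i) = vs i.succ) ∨
      (src (es i) = vs i.succ ∧ tgt (es i) = vs i.castSucc)) :
    (Pi.single h 1 - Pi.single k 1) ⬝ᵥ (X *ᵥ (Pi.single h 1 - Pi.single k 1)) =
      ∑ i : Fin ℓ, w (es i) := by
  -- row formula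
  have hrow : ∀ e, src e ≠ tgt e →
      (fun v => A e v) = (Pi.single (tgt e) 1 - Pi.single (src e) 1 : Fin n → ℝ) := by
    intro e he
    funext v
    rw [hA]
    rcases eq_or_ne v (tgt e) with rfl | hvt
    · simp [Pi.single_apply, he.symm]
    · rcases eq_or_ne v (src e) with rfl | hvs
      · simp [Pi.single_apply, hvt, he]
      · simp [Pi.single_apply, hvt, hvs]
  -- kernel of A is constant vectors
  have hker : ∀ x : Fin n → ℝ, A *ᵥ x = 0 → ∀ v, x v = x ⟨0, hn⟩ := by
    intro x hx v
    have hcv := hconn (⟨0, hn⟩ : Fin n) v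
    induction hcv with
    | refl => rfl
    | @tail b c hab hbc ih =>
      obtain ⟨e, he⟩ := hbc
      have hbceq : x c = x b := by
        rcases eq_or_ne (src e) (tgt e) with hst | hst
        · rcases he with ⟨h1, h2⟩ | ⟨h1, h2⟩ <;> rw [← h1, ← h2, hst]
        · have h0 : (fun u => A e u) ⬝ᵥ x = 0 := by
            have := congrFun hx e
            simpa [Matrix.mulVec, dotProduct] using this
          rw [hrow e hst, sub_dotProduct, single_dotProduct,
            single_dotProduct, one_mul, one_mul] at h0
          rcases he with ⟨h1, h2⟩ | ⟨h1, h2⟩ <;> rw [← h1, ← h2] <;> linarith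
      rw [hbceq, ih]
  obtain ⟨hAinj, hA1⟩ := incidence_aux hn htree A hker
  -- Z is invertible
  have hdet : IsUnit (Matrix.diagonal w).det := by
    rw [Matrix.det_diagonal]
    exact (Finset.prod_pos (fun e _ => hw e)).ne'.isUnit
  -- Step C : A * X * Aᵀ = diagonal w
  have hAXA : A * X * Aᵀ = Matrix.diagonal w := by
    have hAJ : A * Matrix.vecMulVec (fun _ : Fin n => (1:ℝ)) (Pi.single (⟨0, hn⟩ : Fin n) 1) = 0 := by
      ext i j
      have hsum : ∑ u, A i u = 0 := by
        have := congrFun hA1 i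
        simpa [Matrix.mulVec, dotProduct] using this
      simp [Matrix.mul_apply, Matrix.vecMulVec_apply, ← Finset.sum_mul, hsum]
    have h1 : A * X * Aᵀ * (Matrix.diagonal w)⁻¹ * A = A := by
      have e1 : A * (X * L) =
          A * ((1 : Matrix (Fin n) (Fin n) ℝ)
            - Matrix.vecMulVec (fun _ : Fin n => (1:ℝ)) (Pi.single (⟨0, hn⟩ : Fin n) 1)) := by
        rw [hXL]
      rw [hL] at e1
      simp only [Matrix.mul_sub, Matrix.mul_one, hAJ, sub_zero, ← Matrix.mul_assoc] at e1
      exact e1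
    have h2 : A * X * Aᵀ * (Matrix.diagonal w)⁻¹ = 1 := by
      set C : Matrix (Fin E) (Fin E) ℝ := A * X * Aᵀ * (Matrix.diagonal w)⁻¹ - 1 with hC
      have hCA : C * A = 0 := by
        rw [hC, Matrix.sub_mul, h1, Matrix.one_mul, sub_self]
      have hCrow : ∀ i, C i = 0 := by
        intro i
        apply hAinj
        funext j
        rw [Matrix.mulVec_transpose]
        have : (C * A) i j = 0 := by rw [hCA]; rfl
        simpa [Matrix.mul_apply, Matrix.vecMul, dotProduct] using this
      have : C = 0 := by ext i j; exact congrFun (hCrow i) j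
      rw [hC, sub_eq_zero] at this
      exact this
    calc A * X * Aᵀ = A * X * Aᵀ * ((Matrix.diagonal w)⁻¹ * Matrix.diagonal w) := by
          rw [Matrix.nonsing_inv_mul _ hdet, Matrix.mul_one]
      _ = Matrix.diagonal w := by rw [← Matrix.mul_assoc, h2, Matrix.one_mul]
  -- path edges have distinct endpoints
  have hcs : ∀ i : Fin ℓ, vs i.castSucc ≠ vs i.succ := by
    intro i hc
    exact (Fin.castSucc_lt_succ : i.castSucc < i.succ).ne (hinj hc)
  have hne : ∀ i : Fin ℓ, src (es i) ≠ tgt (es i) := by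
    intro i
    rcases hpath i with ⟨h1, h2⟩ | ⟨h1, h2⟩
    · rw [h1, h2]; exact hcs i
    · rw [h1, h2]; exact (hcs i).symm
  -- es is injective
  have hesinj : Function.Injective es := by
    intro i j hij
    rcases hpath i with ⟨hi1, hi2⟩ | ⟨hi1, hi2⟩ <;>
      rcases hpath j with ⟨hj1, hj2⟩ | ⟨hj1, hj2⟩ <;>
      rw [hij] at hi1 hi2
    · exact Fin.castSucc_injective _ (hinj (hi1.symm.trans hj1))
    · have e1 := congrArg Fin.val (hinj (hi1.symm.trans hj1))
      have e2 := congrArg Fin.val (hinj (hi2.symm.trans hj2))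
      simp [Fin.val_succ] at e1 e2
      omega
    · have e1 := congrArg Fin.val (hinj (hi1.symm.trans hj1))
      have e2 := congrArg Fin.val (hinj (hi2.symm.trans hj2))
      simp [Fin.val_succ] at e1 e2
      omega
    · exact Fin.succ_injective _ (hinj (hi1.symm.trans hj1))
  -- the path flow
  set σ : Fin ℓ → ℝ := fun i => if src (es i) = vs i.castSucc then 1 else -1 with hσ
  set f : Fin E → ℝ := ∑ i : Fin ℓ, σ i • (Pi.single (es i) (1:ℝ) : Fin E → ℝ) with hf
  -- each term of Aᵀ *ᵥ f
  have hterm : ∀ i : Fin ℓ, σ i • (Aᵀ *ᵥ Pi.single (es i) (1:ℝ)) =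
      Pi.single (vs i.succ) 1 - Pi.single (vs i.castSucc) 1 := by
    intro i
    have hcol : Aᵀ *ᵥ Pi.single (es i) (1:ℝ) =
        (Pi.single (tgt (es i)) 1 - Pi.single (src (es i)) 1 : Fin n → ℝ) := by
      rw [← hrow (es i) (hne i)]
      funext v
      simp [Matrix.mulVec_single, Matrix.transpose_apply]
    rw [hcol]
    rcases hpath i with ⟨h1, h2⟩ | ⟨h1, h2⟩
    · rw [hσ]; simp [h1, h2]
    · rw [hσ]; simp [h1, h2, (hcs i).symm, neg_sub]
  -- telescoping sum
  have htel : ∑ i : Fin ℓ, ((Pi.single (vs i.succ) 1 - Pi.single (vs i.castSucc) 1 : Fin n → ℝ))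
      = Pi.single k 1 - Pi.single h 1 := by
    set g : ℕ → (Fin n → ℝ) :=
      fun m => Pi.single (vs ⟨min m ℓ, Nat.lt_succ_of_le (min_le_right m ℓ)⟩) 1 with hg
    have hgdef : ∀ (m : ℕ) (hm : m ≤ ℓ), g m = Pi.single (vs ⟨m, Nat.lt_succ_of_le hm⟩) 1 := by
      intro m hm
      have hfin : (⟨min m ℓ, Nat.lt_succ_of_le (min_le_right m ℓ)⟩ : Fin (ℓ + 1))
          = ⟨m, Nat.lt_succ_of_le hm⟩ := Fin.ext (by simp [Nat.min_eq_left hm])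
      simp only [hg]
      rw [hfin]
    have hgi : ∀ i : Fin ℓ,
        (Pi.single (vs i.succ) 1 - Pi.single (vs i.castSucc) 1 : Fin n → ℝ)
          = g (↑i + 1) - g ↑i := by
      intro i
      rw [hgdef (↑i + 1) i.isLt, hgdef ↑i (le_of_lt i.isLt)]
      rfl
    calc ∑ i : Fin ℓ, ((Pi.single (vs i.succ) 1 - Pi.single (vs i.castSucc) 1 : Fin n → ℝ))
        = ∑ i : Fin ℓ, (g (↑i + 1) - g ↑i) :=
          Finset.sum_congr rfl (fun i _ => hgi i)
      _ = ∑ m ∈ Finset.range ℓ, (g (m + 1) - g m) :=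
          Fin.sum_univ_eq_sum_range (fun m => g (m + 1) - g m) ℓ
      _ = g ℓ - g 0 := Finset.sum_range_sub g ℓ
      _ = Pi.single k 1 - Pi.single h 1 := by
        rw [hgdef ℓ le_rfl, hgdef 0 (Nat.zero_le ℓ), ← hlast, ← hfirst]
        congr 2 <;> exact congrArg vs (Fin.ext (by simp [Fin.last]))
  -- Aᵀ *ᵥ f
  have hAf : Aᵀ *ᵥ f = Pi.single k 1 - Pi.single h 1 := by
    have : Aᵀ *ᵥ f = ∑ i : Fin ℓ, σ i • (Aᵀ *ᵥ Pi.single (es i) (1:ℝ)) := by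
      rw [hf]
      show Aᵀ.mulVecLin _ = _
      rw [map_sum]
      exact Finset.sum_congr rfl (fun i _ => by rw [_root_.map_smul]; rfl)
    rw [this, Finset.sum_congr rfl (fun i _ => hterm i), htel]
  -- values of f
  have hfval : ∀ j : Fin ℓ, f (es j) = σ j := by
    intro j
    rw [hf]
    rw [Finset.sum_apply]
    rw [Finset.sum_eq_single j]
    · simp
    · intro i _ hij
      have : es j ≠ es i := fun hc => hij (hesinj hc.symm)
      simp [Pi.single_apply, this.symm]
    · intro hj; exact absurd (Finset.mem_univ j) hj
  have hfzero : ∀ e : Fin E, e ∉ Finset.univ.image es → f e = 0 := by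
    intro e he
    rw [hf, Finset.sum_apply]
    apply Finset.sum_eq_zero
    intro i _
    have : e ≠ es i := by
      intro hc
      exact he (Finset.mem_image.mpr ⟨i, Finset.mem_univ i, hc.symm⟩)
    simp [Pi.single_apply, this]
  -- final computation
  have hu : (Pi.single h 1 - Pi.single k 1 : Fin n → ℝ) = Aᵀ *ᵥ (-f) := by
    rw [Matrix.mulVec_neg, hAf, neg_sub]
  rw [hu]
  calc (Aᵀ *ᵥ (-f)) ⬝ᵥ (X *ᵥ (Aᵀ *ᵥ (-f)))
      = (-f) ⬝ᵥ (A *ᵥ (X *ᵥ (Aᵀ *ᵥ (-f)))) := by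
        rw [Matrix.mulVec_transpose, ← Matrix.dotProduct_mulVec]
    _ = (-f) ⬝ᵥ ((A * X * Aᵀ) *ᵥ (-f)) := by
        rw [Matrix.mulVec_mulVec, Matrix.mulVec_mulVec]
    _ = f ⬝ᵥ (Matrix.diagonal w *ᵥ f) := by
        rw [hAXA, Matrix.mulVec_neg, dotProduct_neg, neg_dotProduct, neg_neg]
    _ = ∑ e : Fin E, f e * (w e * f e) := by
        simp [dotProduct, Matrix.mulVec_diagonal]
    _ = ∑ e ∈ Finset.univ.image es, f e * (w e * f e) := by
        refine (Finset.sum_subset (Finset.subset_univ _) ?_).symm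
        intro e _ he
        rw [hfzero e he, zero_mul]
    _ = ∑ i : Fin ℓ, f (es i) * (w (es i) * f (es i)) := by
        rw [Finset.sum_image (fun i _ j _ hij => hesinj hij)]
    _ = ∑ i : Fin ℓ, w (es i) := by
        refine Finset.sum_congr rfl (fun i _ => ?_)
        rw [hfval i, hσ]
        by_cases hsi : src (es i) = vs i.castSucc <;> simp [hsi] <;> ring
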